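/- Let r ≤ d ≤ n with r ≤ d - r, and let M be the C(n,d-r) × C(n,r) disjointness matrix (M_{I,J} = 1 iff the (d-r)-set I and the r-set J are disjoint). For each r-subset K of {1,…,n}, the sum of the rows of M indexed by (d-r)-sets J containing K equals a nonzero scalar multiple of the row vector v_K of the disjointness matrix D_r^n (where (v_K)_J = 1 iff K ∩ J = ∅ for r-sets J). -/

import Mathlib

open Finset

/-- For `r ≤ d - r` and `d ≤ n`, summing the rows of the `(d-r) × r` disjointness matrix `M`
indexed by the `(d-r)`-sets containing a fixed `r`-set `K` yields a nonzero scalar multiple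
of the row `v_K` of the square disjointness matrix `D_r^n`. -/
theorem row_sum_disjointness (n d r : ℕ) (hr : r ≤ d - r) (hrd : r ≤ d) (hd : d ≤ n)
    (K : {s : Finset (Fin n) // s.card = r}) :
    ∃ c : ℚ, c ≠ 0 ∧
      ∀ J : {s : Finset (Fin n) // s.card = r},
        (∑ I ∈ (Finset.univ : Finset {s : Finset (Fin n) // s.card = d - r}).filter
            (fun I => K.1 ⊆ I.1),
          if Disjoint I.1 J.1 then (1 : ℚ) else 0) =
        c * (if Disjoint K.1 J.1 then (1 : ℚ) else 0) := by
  have h2r : 2 * r ≤ d := by omega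
  refine ⟨((n - 2*r).choose (d - 2*r) : ℚ), ?_, ?_⟩
  · have : 0 < (n - 2*r).choose (d - 2*r) := Nat.choose_pos (by omega)
    exact_mod_cast this.ne'
  intro J
  by_cases hKJ : Disjoint K.1 J.1
  · simp only [hKJ, if_true, mul_one]
    rw [Finset.sum_boole]
    rw [Finset.filter_filter]
    norm_cast
    have hcard : ((K.1 ∪ J.1)ᶜ : Finset (Fin n)).card = n - 2*r := by
      rw [card_compl, card_union_of_disjoint hKJ, K.2, J.2, Fintype.card_fin]
      omega
    rw [show (n - 2*r).choose (d - 2*r)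
        = (Finset.powersetCard (d - 2*r) ((K.1 ∪ J.1)ᶜ)).card by
      rw [Finset.card_powersetCard, hcard]]
    refine Finset.card_bij' (fun I _ => I.1 \ K.1)
      (fun s hs => ⟨s ∪ K.1, ?_⟩) ?_ ?_ ?_ ?_
    · rw [Finset.mem_powersetCard] at hs
      have hdisj : Disjoint s K.1 := by
        refine Finset.disjoint_left.2 fun x hx hxK => ?_
        have := hs.1 hx
        simp [Finset.mem_compl, Finset.mem_union] at this
        exact this.1 hxK
      rw [Finset.card_union_of_disjoint hdisj, hs.2, K.2]
      omega
    · intro I hI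
      simp only [Finset.mem_filter, Finset.mem_univ, true_and] at hI
      obtain ⟨hKsub, hIJ⟩ := hI
      rw [Finset.mem_powersetCard]
      constructor
      · intro x hx
        rw [Finset.mem_sdiff] at hx
        rw [Finset.mem_compl, Finset.mem_union]
        push_neg
        exact ⟨hx.2, Finset.disjoint_left.1 hIJ hx.1⟩
      · rw [Finset.card_sdiff_of_subset hKsub, I.2, K.2]
        omega
    · intro s hs
      simp only [Finset.mem_filter, Finset.mem_univ, true_and]
      rw [Finset.mem_powersetCard] at hs
      constructor
      · exact Finset.subset_union_right
      · refine Finset.disjoint_left.2 fun x hx hxJ => ?_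
        rcases Finset.mem_union.1 hx with h | h
        · have := hs.1 h
          simp [Finset.mem_compl, Finset.mem_union] at this
          exact this.2 hxJ
        · exact Finset.disjoint_left.1 hKJ h hxJ
    · intro I hI
      simp only [Finset.mem_filter, Finset.mem_univ, true_and] at hI
      ext1
      exact Finset.sdiff_union_of_subset hI.1
    · intro s hs
      rw [Finset.mem_powersetCard] at hs
      have hdisj : Disjoint s K.1 := by
        refine Finset.disjoint_left.2 fun x hx hxK => ?_
        have := hs.1 hx
        simp [Finset.mem_compl, Finset.mem_union] at this
        exact this.1 hxK
      exact Finset.union_sdiff_cancel_right hdisj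
  · simp only [hKJ, if_false, mul_zero]
    refine Finset.sum_eq_zero fun I hI => ?_
    simp only [Finset.mem_filter, Finset.mem_univ, true_and] at hI
    rw [if_neg]
    exact fun h => hKJ (h.mono_left hI)
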